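/- arXiv:1305.4343 — 4 statements merged into one kernel-verified Lean document; each statement's English description precedes it below -/
import Mathlib

section
/- Let $R$ be an integral domain graded by an abelian group $K_2$, let $w \in K_2$ be an element of infinite order, and let $f \in R$ be homogeneous of degree $w$. Consider the coarser grading of $R$ by $K_1 := K_2/\langle w \rangle$. Then $f - 1$ is $K_1$-prime in $R$, i.e., whenever $f-1$ divides a product $ab$ of $K_1$-homogeneous elements $a, b \in R$, it divides $a$ or $b$. -/
open DirectSum in

/-- A nonzero homogeneous `f` of infinite-order degree `w`: any `K₂`-homogeneous
element divisible by `f - 1` is zero. -/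
theorem homog_dvd_zero' {R K₂ : Type*} [CommRing R] [IsDomain R] [AddCommGroup K₂]
    [DecidableEq K₂] (𝒜 : K₂ → AddSubgroup R) [GradedRing 𝒜]
    (w : K₂) (hw : addOrderOf w = 0) {f : R} (hf : f ∈ 𝒜 w) (hf0 : f ≠ 0)
    {e : K₂} {x : R} (hx : x ∈ 𝒜 e) (hd : (f - 1) ∣ x) : x = 0 := by
  obtain ⟨c, hc⟩ := hd
  set cc : K₂ → R := fun d => (DirectSum.decompose 𝒜 c d : R) with hcc
  have hwne : ∀ n : ℕ, 0 < n → n • w ≠ 0 := fun n hn => addOrderOf_eq_zero_iff'.mp hw n hn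
  have key : ∀ d : K₂, f * cc d = (if w + d = e then x else 0) + cc (w + d) := by
    intro d
    have h1 : (decompose 𝒜 (f * c) (w + d) : R) = f * cc d :=
      DirectSum.coe_decompose_mul_add_of_left_mem 𝒜 hf
    have h2 : f * c = x + c := by rw [hc]; ring
    rw [h2, DirectSum.decompose_add, DirectSum.add_apply, AddSubgroup.coe_add] at h1
    rw [← h1, hcc]
    congr 1
    by_cases he : w + d = e
    · rw [if_pos he, DirectSum.decompose_of_mem_same 𝒜 (he ▸ hx)]
    · rw [if_neg he, DirectSum.decompose_of_mem_ne 𝒜 hx (fun h => he h.symm)]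
  have hfin : Set.Finite {i : K₂ | cc i ≠ 0} := by
    simpa [hcc, ne_eq, ZeroMemClass.coe_eq_zero] using
      DFinsupp.finite_support (DirectSum.decompose 𝒜 c)
  have hsmul_inj : Function.Injective fun n : ℕ => n • w := by
    intro m n h
    simp only at h
    rcases lt_trichotomy m n with hmn | hmn | hmn
    · exact absurd (by rw [sub_nsmul w hmn.le, ← h]; simp : (n - m) • w = 0)
        (hwne _ (Nat.sub_pos_of_lt hmn))
    · exact hmn
    · exact absurd (by rw [sub_nsmul w hmn.le, h]; simp : (m - n) • w = 0)
        (hwne _ (Nat.sub_pos_of_lt hmn))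
  -- upward chain
  have hup : ∀ k : ℕ, cc (e + (k + 1) • w) = f ^ (k + 1) * cc e := by
    intro k
    induction k with
    | zero =>
      have hk := key e
      rw [if_neg (fun h => hwne 1 one_pos (by
        have h2 : (1 : ℕ) • w = w + e - e := by rw [one_nsmul]; abel
        rw [h2, h, sub_self]))] at hk
      rw [zero_add] at hk
      rw [show e + (0 + 1) • w = w + e from by rw [zero_add, one_nsmul]; abel, ← hk]
      ring
    | succ k ih =>
      have hk := key (e + (k + 1) • w)
      rw [if_neg (fun h => hwne (k + 2) (by omega) (by
        have h2 : (k + 2) • w = w + (e + (k + 1) • w) - e := by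
          rw [show k + 2 = (k + 1) + 1 from rfl, succ_nsmul]; abel
        rw [h2, h, sub_self]))] at hk
      rw [zero_add] at hk
      rw [show e + (k + 1 + 1) • w = w + (e + (k + 1) • w) from by rw [succ_nsmul]; abel,
        ← hk, ih]
      ring
  -- downward chain
  have hdown : ∀ k : ℕ, cc (e - w) = f ^ k * cc (e - w - k • w) := by
    intro k
    induction k with
    | zero => simp
    | succ k ih =>
      have hk := key (e - w - (k + 1) • w)
      rw [if_neg (fun h => hwne (k + 1) (by omega) (by
        have h2 : (k + 1) • w = -(w + (e - w - (k + 1) • w) - e) := by abel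
        rw [h2, h, sub_self, neg_zero]))] at hk
      rw [zero_add] at hk
      have h3 : w + (e - w - (k + 1) • w) = e - w - k • w := by
        rw [succ_nsmul]; abel
      rw [h3] at hk
      rw [ih, ← hk]
      ring
  have hvan : ∀ g : ℕ → K₂, Function.Injective g → ∃ n : ℕ, cc (g n) = 0 := by
    intro g hg
    by_contra hK
    push_neg at hK
    exact (Set.infinite_range_of_injective hg)
      (hfin.subset (by rintro _ ⟨n, rfl⟩; exact hK n))
  obtain ⟨K1, hK1⟩ := hvan (fun k => e + (k + 1) • w) (by
    intro m n h
    simp only at h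
    have h2 : (m + 1) • w = (n + 1) • w := by
      have := congrArg (fun t => t - e) h
      simpa using this
    have := hsmul_inj h2
    omega)
  obtain ⟨K2, hK2⟩ := hvan (fun k => e - w - k • w) (by
    intro m n h
    simp only at h
    apply hsmul_inj
    have := congrArg (fun t => (e - w) - t) h
    simpa using this)
  have hcce : cc e = 0 := by
    have h := hup K1
    rw [hK1] at h
    rcases mul_eq_zero.mp h.symm with h' | h'
    · exact absurd h' (pow_ne_zero _ hf0)
    · exact h'
  have hccew : cc (e - w) = 0 := by
    have h := hdown K2
    rwa [hK2, mul_zero] at h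
  have h := key (e - w)
  rwa [if_pos (by abel), hccew, mul_zero, show w + (e - w) = e from by abel, hcce,
    add_zero, eq_comm] at h

open DirectSum in

theorem K1homog_replace {R K₂ : Type*} [CommRing R] [AddCommGroup K₂]
    (𝒜 : K₂ → AddSubgroup R) [SetLike.GradedMonoid 𝒜]
    (w : K₂) {f : R} (hf : f ∈ 𝒜 w)
    (k : K₂ ⧸ AddSubgroup.zmultiples w) {a : R}
    (ha : a ∈ ⨆ u ∈ {u : K₂ |
      (QuotientAddGroup.mk u : K₂ ⧸ AddSubgroup.zmultiples w) = k}, 𝒜 u) :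
    ∃ (d : K₂) (x : R), x ∈ 𝒜 d ∧ (f - 1) ∣ a - x := by
  set S : Set K₂ := {u : K₂ |
      (QuotientAddGroup.mk u : K₂ ⧸ AddSubgroup.zmultiples w) = k} with hS
  -- shifting lemma
  have shift : ∀ (n : ℕ) (d : K₂) (x : R), x ∈ 𝒜 d →
      x * f ^ n ∈ 𝒜 (d + n • w) ∧ (f - 1) ∣ x - x * f ^ n := by
    intro n d x hx
    constructor
    · exact SetLike.mul_mem_graded hx (SetLike.pow_mem_graded n hf)
    · have h1 : (f - 1) ∣ f ^ n - 1 := by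
        have := sub_dvd_pow_sub_pow f 1 n
        rwa [one_pow] at this
      obtain ⟨t, ht⟩ := h1
      exact ⟨-(x * t), by rw [show x - x * f ^ n = -(x * (f ^ n - 1)) from by ring, ht]; ring⟩
  have main : ∀ y : R, y ∈ (⨆ u ∈ S, 𝒜 u) →
      ∃ (d : K₂) (x : R), (QuotientAddGroup.mk d : K₂ ⧸ AddSubgroup.zmultiples w) = k ∧
        x ∈ 𝒜 d ∧ (f - 1) ∣ y - x := by
    intro y hy
    refine AddSubgroup.iSup_induction (C := fun y => ∃ (d : K₂) (x : R),
      (QuotientAddGroup.mk d : K₂ ⧸ AddSubgroup.zmultiples w) = k ∧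
        x ∈ 𝒜 d ∧ (f - 1) ∣ y - x) (fun u => ⨆ _ : u ∈ S, 𝒜 u) hy ?_ ?_ ?_
    · intro u z hz
      have hz' : z ∈ ⨆ _ : u ∈ S, 𝒜 u := hz
      by_cases hu : u ∈ S
      · rw [iSup_pos hu] at hz'
        exact ⟨u, z, hu, hz', by simp⟩
      · rw [iSup_neg hu] at hz'
        obtain ⟨d, hd⟩ := QuotientAddGroup.mk_surjective k
        rw [AddSubgroup.mem_bot] at hz'
        exact ⟨d, 0, hd, (𝒜 d).zero_mem, by simp [hz']⟩
    · obtain ⟨d, hd⟩ := QuotientAddGroup.mk_surjective k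
      exact ⟨d, 0, hd, (𝒜 d).zero_mem, by simp⟩
    · rintro y₁ y₂ ⟨d₁, x₁, hk₁, hm₁, hd₁⟩ ⟨d₂, x₂, hk₂, hm₂, hd₂⟩
      have : d₂ - d₁ ∈ AddSubgroup.zmultiples w := by
        rw [← QuotientAddGroup.eq_iff_sub_mem, hk₁, hk₂]
      obtain ⟨m, hm⟩ := AddSubgroup.mem_zmultiples_iff.mp this
      rcases m with n | n
      · -- d₂ = d₁ + n • w
        have hd₂eq : d₁ + n • w = d₂ := by
          have hm' : n • w = d₂ - d₁ := by
            rw [← natCast_zsmul]; exact hm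
          rw [hm']; abel
        obtain ⟨hmem, hdvd⟩ := shift n d₁ x₁ hm₁
        refine ⟨d₂, x₁ * f ^ n + x₂, hk₂, ?_, ?_⟩
        · exact add_mem (hd₂eq ▸ hmem) hm₂
        · have : y₁ + y₂ - (x₁ * f ^ n + x₂) =
              (y₁ - x₁) + (y₂ - x₂) + (x₁ - x₁ * f ^ n) := by ring
          rw [this]
          exact dvd_add (dvd_add hd₁ hd₂) hdvd
      · -- m = -(n+1) : d₁ = d₂ + (n+1) • w
        have hd₁eq : d₂ + (n + 1) • w = d₁ := by
          have : -((n + 1 : ℕ) • w) = d₂ - d₁ := by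
            rw [← natCast_zsmul, ← neg_zsmul]
            exact_mod_cast hm
          have h2 : (n + 1 : ℕ) • w = d₁ - d₂ := by
            rw [← neg_neg ((n + 1 : ℕ) • w), this]; abel
          rw [h2]; abel
        obtain ⟨hmem, hdvd⟩ := shift (n + 1) d₂ x₂ hm₂
        refine ⟨d₁, x₁ + x₂ * f ^ (n + 1), hk₁, ?_, ?_⟩
        · exact add_mem hm₁ (hd₁eq ▸ hmem)
        · have : y₁ + y₂ - (x₁ + x₂ * f ^ (n + 1)) =
              (y₁ - x₁) + (y₂ - x₂) + (x₂ - x₂ * f ^ (n + 1)) := by ring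
          rw [this]
          exact dvd_add (dvd_add hd₁ hd₂) hdvd
  obtain ⟨d, x, _, hx, hdvd⟩ := main a ha
  exact ⟨d, x, hx, hdvd⟩

/-- Let `R` be an integral domain graded by an abelian group `K₂`,
`w ∈ K₂` of infinite order, `f ∈ R` homogeneous of degree `w`.  With respect to the
coarsened grading by `K₁ = K₂ ⧸ ⟨w⟩`, the element `f - 1` is `K₁`-prime: whenever it
divides a product of `K₁`-homogeneous elements, it divides one of the factors. -/
theorem f_sub_one_K1_prime
    {R K₂ : Type*} [CommRing R] [IsDomain R] [AddCommGroup K₂] [DecidableEq K₂]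
    (𝒜 : K₂ → AddSubgroup R) [SetLike.GradedMonoid 𝒜] [DirectSum.Decomposition 𝒜]
    (w : K₂) (hw : addOrderOf w = 0) (f : R) (hf : f ∈ 𝒜 w)
    -- `K₁`-homogeneity with respect to the coarsened grading by `K₂ ⧸ ⟨w⟩`:
    (K1Homog : R → Prop)
    (hK1Homog : ∀ a : R, K1Homog a ↔
      ∃ k : K₂ ⧸ AddSubgroup.zmultiples w,
        a ∈ ⨆ u ∈ {u : K₂ |
          (QuotientAddGroup.mk u : K₂ ⧸ AddSubgroup.zmultiples w) = k}, 𝒜 u)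
    (a b : R) (ha : K1Homog a) (hb : K1Homog b)
    (hdvd : (f - 1) ∣ a * b) :
    (f - 1) ∣ a ∨ (f - 1) ∣ b := by
  by_cases hf0 : f = 0
  · exact Or.inl ⟨-a, by rw [hf0]; ring⟩
  · haveI : GradedRing 𝒜 := { ‹SetLike.GradedMonoid 𝒜›, ‹DirectSum.Decomposition 𝒜› with }
    obtain ⟨k₁, ha'⟩ := (hK1Homog a).mp ha
    obtain ⟨k₂, hb'⟩ := (hK1Homog b).mp hb
    obtain ⟨d₁, x₁, hm₁, hd₁⟩ := K1homog_replace 𝒜 w hf k₁ ha'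
    obtain ⟨d₂, x₂, hm₂, hd₂⟩ := K1homog_replace 𝒜 w hf k₂ hb'
    have hx12 : (f - 1) ∣ x₁ * x₂ := by
      have heq : x₁ * x₂ = a * b - ((a - x₁) * b + x₁ * (b - x₂)) := by ring
      rw [heq]
      exact dvd_sub hdvd (dvd_add (hd₁.mul_right b) (hd₂.mul_left x₁))
    have hz : x₁ * x₂ = 0 :=
      homog_dvd_zero' 𝒜 w hw hf hf0 (SetLike.mul_mem_graded hm₁ hm₂) hx12
    rcases mul_eq_zero.mp hz with h | h
    · left; rwa [h, sub_zero] at hd₁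
    · right; rwa [h, sub_zero] at hd₂
end

section
/- Let $R$ be an integral domain graded by an abelian group $K_2$, $w \in K_2$ of infinite order, $f \in R$ homogeneous of degree $w$, and grade $R$ by $K_1 = K_2/\langle w \rangle$. If $g \in R$ is $K_1$-homogeneous and is written $g = g_0 + g_1 + \cdots + g_n$ with each $g_i$ being $K_2$-homogeneous of degree $\deg_{K_2}(g_0) + i w$, and $(f-1)g = ab$ for $K_1$-homogeneous $a = a_0 + \cdots + a_{n_1}$, $b = b_0 + \cdots + b_{n_2}$ decomposed analogously, then $(a_0 f^{n_1} + a_1 f^{n_1-1} + \cdots + a_{n_1})(b_0 f^{n_2} + b_1 f^{n_2-1} + \cdots + b_{n_2}) = 0$ in $R$. -/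
open Finset

/-- In a `K₂`-graded integral domain with `w` of infinite order and
`f` homogeneous of degree `w` (nonzero), if a `K₁`-homogeneous element
`g = g₀ + ⋯ + gₙ` (with `gᵢ` of `K₂`-degree `d_g + i•w`) satisfies
`(f-1)·g = a·b` for `K₁`-homogeneous `a = a₀ + ⋯ + a_{n₁}`, `b = b₀ + ⋯ + b_{n₂}`
decomposed analogously, then
`(a₀ f^{n₁} + ⋯ + a_{n₁})(b₀ f^{n₂} + ⋯ + b_{n₂}) = 0`. -/
theorem eliminate_g_product_eq_zero
    {R K₂ : Type*} [CommRing R] [IsDomain R] [AddCommGroup K₂] [DecidableEq K₂]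
    (𝒜 : K₂ → AddSubgroup R) [SetLike.GradedMonoid 𝒜] [DirectSum.Decomposition 𝒜]
    (w : K₂) (hw : addOrderOf w = 0) (f : R) (hf : f ∈ 𝒜 w) (hf0 : f ≠ 0)
    (n n₁ n₂ : ℕ) (g a b : ℕ → R) (dg da db : K₂)
    (hg : ∀ i ≤ n, g i ∈ 𝒜 (dg + i • w))
    (ha : ∀ i ≤ n₁, a i ∈ 𝒜 (da + i • w))
    (hb : ∀ i ≤ n₂, b i ∈ 𝒜 (db + i • w))
    (hg0 : g 0 ≠ 0) (hgn : g n ≠ 0)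
    (ha0 : a 0 ≠ 0) (han : a n₁ ≠ 0)
    (hb0 : b 0 ≠ 0) (hbn : b n₂ ≠ 0)
    (heq : (f - 1) * ∑ i ∈ range (n + 1), g i =
      (∑ i ∈ range (n₁ + 1), a i) * ∑ i ∈ range (n₂ + 1), b i) :
    (∑ i ∈ range (n₁ + 1), a i * f ^ (n₁ - i)) *
      (∑ i ∈ range (n₂ + 1), b i * f ^ (n₂ - i)) = 0 := by
  -- injectivity of `p ↦ p • w`
  have hninj : ∀ p q : ℕ, p • w = q • w → p = q := by
    intro p q h
    by_contra hne
    have h2 : ((p : ℤ) - q) • w = 0 := by simp [sub_zsmul, natCast_zsmul, h]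
    have hne2 : ((p : ℤ) - q) ≠ 0 := by
      simpa [sub_eq_zero] using fun h => hne (by exact_mod_cast h)
    have h3 : (((p : ℤ) - q).natAbs) • w = 0 := by
      rcases Int.natAbs_eq ((p : ℤ) - q) with he | he
      · rw [he] at h2; exact_mod_cast (natCast_zsmul w _ ▸ h2)
      · rw [he, neg_zsmul, neg_eq_zero] at h2; exact_mod_cast (natCast_zsmul w _ ▸ h2)
    exact addOrderOf_eq_zero_iff'.mp hw _ (Int.natAbs_pos.mpr hne2) h3
  have hcinj : ∀ (c : K₂) (p q : ℕ), c + p • w = c + q • w → p = q :=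
    fun c p q h => hninj p q (add_left_cancel h)
  -- graded component maps
  set Φ : K₂ → R →+ R := fun e =>
    ((𝒜 e).subtype.comp ((DFinsupp.evalAddMonoidHom e).comp
      (DirectSum.decomposeAddEquiv 𝒜).toAddMonoidHom)) with hΦdef
  have hΦ : ∀ (e d : K₂) (x : R), x ∈ 𝒜 d → Φ e x = if d = e then x else 0 := by
    intro e d x hx
    show ((DirectSum.decompose 𝒜 x) e : R) = _
    split
    · next h => subst h; exact DirectSum.decompose_of_mem_same 𝒜 hx
    · next h => exact DirectSum.decompose_of_mem_ne 𝒜 hx h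
  -- memberships
  have hfg : ∀ i ≤ n, f * g i ∈ 𝒜 (dg + (i + 1) • w) := by
    intro i hi
    have h := SetLike.mul_mem_graded hf (hg i hi)
    convert h using 2
    rw [succ_nsmul]; abel
  have habm : ∀ i ≤ n₁, ∀ i' ≤ n₂, a i * b i' ∈ 𝒜 (da + db + (i + i') • w) := by
    intro i hi i' hi'
    have h := SetLike.mul_mem_graded (ha i hi) (hb i' hi')
    convert h using 2
    rw [add_nsmul]; abel
  -- component formulas for both sides of `heq`
  have hL : ∀ e, Φ e ((f - 1) * ∑ i ∈ range (n + 1), g i) =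
      (∑ i ∈ range (n + 1), if dg + (i + 1) • w = e then f * g i else 0) -
      (∑ i ∈ range (n + 1), if dg + i • w = e then g i else 0) := by
    intro e
    have h : (f - 1) * ∑ i ∈ range (n + 1), g i =
        (∑ i ∈ range (n + 1), f * g i) - ∑ i ∈ range (n + 1), g i := by
      rw [sub_mul, one_mul, Finset.mul_sum]
    rw [h, map_sub, map_sum, map_sum]
    congr 1
    · exact Finset.sum_congr rfl fun i hi =>
        hΦ e _ _ (hfg i (Nat.lt_succ_iff.mp (mem_range.mp hi)))
    · exact Finset.sum_congr rfl fun i hi =>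
        hΦ e _ _ (hg i (Nat.lt_succ_iff.mp (mem_range.mp hi)))
  have hR : ∀ e, Φ e ((∑ i ∈ range (n₁ + 1), a i) * ∑ i ∈ range (n₂ + 1), b i) =
      ∑ i ∈ range (n₁ + 1), ∑ i' ∈ range (n₂ + 1),
        if da + db + (i + i') • w = e then a i * b i' else 0 := by
    intro e
    rw [Finset.sum_mul_sum, map_sum]
    refine Finset.sum_congr rfl fun i hi => ?_
    rw [map_sum]
    exact Finset.sum_congr rfl fun i' hi' =>
      hΦ e _ _ (habm i (Nat.lt_succ_iff.mp (mem_range.mp hi))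
        i' (Nat.lt_succ_iff.mp (mem_range.mp hi')))
  have hE : ∀ e, (∑ i ∈ range (n + 1), if dg + (i + 1) • w = e then f * g i else 0) -
      (∑ i ∈ range (n + 1), if dg + i • w = e then g i else 0) =
      ∑ i ∈ range (n₁ + 1), ∑ i' ∈ range (n₂ + 1),
        if da + db + (i + i') • w = e then a i * b i' else 0 := by
    intro e
    rw [← hL e, ← hR e, heq]
  -- evaluations of the left-hand formulas at `dg + k • w`
  have hu : ∀ k : ℕ, (∑ i ∈ range (n + 1), if dg + (i + 1) • w = dg + k • w then f * g i else 0)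
      = if 1 ≤ k ∧ k ≤ n + 1 then f * g (k - 1) else 0 := by
    intro k
    by_cases hk : 1 ≤ k ∧ k ≤ n + 1
    · rw [if_pos hk, Finset.sum_eq_single (k - 1)]
      · rw [if_pos (by rw [show k - 1 + 1 = k from by omega])]
      · intro i hi hne
        exact if_neg fun h => hne (by have := hcinj dg (i + 1) k h; omega)
      · intro hmem
        exact absurd (mem_range.mpr (by omega)) hmem
    · rw [if_neg hk]
      refine Finset.sum_eq_zero fun i hi => if_neg fun h => ?_
      have h2 := hcinj dg (i + 1) k h
      have h3 := mem_range.mp hi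
      omega
  have hv : ∀ k : ℕ, (∑ i ∈ range (n + 1), if dg + i • w = dg + k • w then g i else 0)
      = if k ≤ n then g k else 0 := by
    intro k
    by_cases hk : k ≤ n
    · rw [if_pos hk, Finset.sum_eq_single k]
      · rw [if_pos rfl]
      · intro i hi hne
        exact if_neg fun h => hne (hcinj dg i k h)
      · intro hmem
        exact absurd (mem_range.mpr (by omega)) hmem
    · rw [if_neg hk]
      refine Finset.sum_eq_zero fun i hi => if_neg fun h => ?_
      have h2 := hcinj dg i k h
      have h3 := mem_range.mp hi
      omega
  -- find `j₀` with `da + db + j₀ • w = dg`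
  have hex : ∃ i ∈ range (n₁ + 1), ∃ i' ∈ range (n₂ + 1), da + db + (i + i') • w = dg := by
    by_contra hcon
    push_neg at hcon
    have h := hE (dg + 0 • w)
    rw [hu 0, hv 0, if_neg (by omega), if_pos (by omega)] at h
    have h2 : (0 : R) - g 0 = 0 := by
      rw [h]
      exact Finset.sum_eq_zero fun i hi => Finset.sum_eq_zero fun i' hi' =>
        if_neg (by simp only [zero_nsmul, add_zero]; exact hcon i hi i' hi')
    apply hg0
    simpa using h2
  obtain ⟨i₁, hi₁, i₂, hi₂, hj₀⟩ := hex
  set j₀ := i₁ + i₂ with hj₀def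
  have hj₀le : j₀ ≤ n₁ + n₂ := by
    have := mem_range.mp hi₁; have := mem_range.mp hi₂; omega
  have hdeg : ∀ k : ℕ, da + db + (j₀ + k) • w = dg + k • w := by
    intro k
    rw [add_nsmul, ← add_assoc, hj₀]
  -- the coefficients of `a·b`
  set s : ℕ → R := fun m => ∑ i ∈ range (n₁ + 1), ∑ i' ∈ range (n₂ + 1),
    if i + i' = m then a i * b i' else 0 with hsdef
  have hsm : ∀ m : ℕ, (∑ i ∈ range (n₁ + 1), ∑ i' ∈ range (n₂ + 1),
      if da + db + (i + i') • w = da + db + m • w then a i * b i' else 0) = s m := by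
    intro m
    refine Finset.sum_congr rfl fun i _ => Finset.sum_congr rfl fun i' _ => ?_
    refine if_congr ⟨fun h => hcinj _ _ _ h, fun h => by rw [h]⟩ rfl rfl
  -- the key recursion
  have hkey : ∀ k : ℕ,
      (if 1 ≤ k ∧ k ≤ n + 1 then f * g (k - 1) else 0) - (if k ≤ n then g k else 0)
        = s (j₀ + k) := by
    intro k
    have h := hE (dg + k • w)
    rw [hu k, hv k, ← hdeg k, hsm (j₀ + k)] at h
    exact h
  -- vanishing of low coefficients
  have hlow : ∀ m : ℕ, m < j₀ → s m = 0 := by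
    intro m hm
    have h := hE (da + db + m • w)
    rw [hsm m] at h
    rw [← h]
    have h1 : (∑ i ∈ range (n + 1),
        if dg + (i + 1) • w = da + db + m • w then f * g i else 0) = 0 :=
      Finset.sum_eq_zero fun i _ => if_neg fun hc => by
        rw [← hdeg (i + 1)] at hc
        have := hcinj (da + db) (j₀ + (i + 1)) m hc
        omega
    have h2 : (∑ i ∈ range (n + 1),
        if dg + i • w = da + db + m • w then g i else 0) = 0 :=
      Finset.sum_eq_zero fun i _ => if_neg fun hc => by
        rw [← hdeg i] at hc
        have := hcinj (da + db) (j₀ + i) m hc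
        omega
    rw [h1, h2, sub_zero]
  -- vanishing of high coefficients
  have hhigh : ∀ m : ℕ, n₁ + n₂ < m → s m = 0 := by
    intro m hm
    refine Finset.sum_eq_zero fun i hi => Finset.sum_eq_zero fun i' hi' => if_neg fun hc => ?_
    have := mem_range.mp hi; have := mem_range.mp hi'
    omega
  -- `j₀ + (n+1) ≤ n₁ + n₂`
  have hKle : j₀ + (n + 1) ≤ n₁ + n₂ := by
    by_contra hcon
    have h := hkey (n + 1)
    rw [hhigh _ (by omega), if_pos ⟨by omega, le_refl _⟩, if_neg (by omega)] at h
    have h2 : f * g n = 0 := by simpa using h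
    rcases mul_eq_zero.mp h2 with h3 | h3
    · exact hf0 h3
    · exact hgn h3
  set kk := n₁ + n₂ - j₀ with hkkdef
  have hkk1 : j₀ + kk = n₁ + n₂ := by omega
  have hkk2 : n + 1 ≤ kk := by omega
  -- Step 1: the target product equals `∑ m, s m * f ^ (n₁+n₂-m)`
  have hT : (∑ i ∈ range (n₁ + 1), a i * f ^ (n₁ - i)) *
      (∑ i ∈ range (n₂ + 1), b i * f ^ (n₂ - i)) =
      ∑ m ∈ range (n₁ + n₂ + 1), s m * f ^ (n₁ + n₂ - m) := by
    rw [Finset.sum_mul_sum]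
    symm
    calc ∑ m ∈ range (n₁ + n₂ + 1), s m * f ^ (n₁ + n₂ - m)
        = ∑ m ∈ range (n₁ + n₂ + 1), ∑ i ∈ range (n₁ + 1), ∑ i' ∈ range (n₂ + 1),
            (if i + i' = m then a i * b i' * f ^ (n₁ + n₂ - m) else 0) := by
          refine Finset.sum_congr rfl fun m _ => ?_
          rw [hsdef]
          rw [Finset.sum_mul]
          refine Finset.sum_congr rfl fun i _ => ?_
          rw [Finset.sum_mul]
          refine Finset.sum_congr rfl fun i' _ => ?_
          rw [ite_mul, zero_mul]
      _ = ∑ i ∈ range (n₁ + 1), ∑ i' ∈ range (n₂ + 1), ∑ m ∈ range (n₁ + n₂ + 1),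
            (if i + i' = m then a i * b i' * f ^ (n₁ + n₂ - m) else 0) := by
          rw [Finset.sum_comm]
          exact Finset.sum_congr rfl fun i _ => Finset.sum_comm
      _ = ∑ i ∈ range (n₁ + 1), ∑ i' ∈ range (n₂ + 1),
            a i * f ^ (n₁ - i) * (b i' * f ^ (n₂ - i')) := by
          refine Finset.sum_congr rfl fun i hi => Finset.sum_congr rfl fun i' hi' => ?_
          have hii := mem_range.mp hi
          have hii' := mem_range.mp hi'
          rw [Finset.sum_ite_eq (range (n₁ + n₂ + 1)) (i + i')
            (fun m => a i * b i' * f ^ (n₁ + n₂ - m)),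
            if_pos (mem_range.mpr (by omega))]
          rw [show n₁ + n₂ - (i + i') = (n₁ - i) + (n₂ - i') from by omega, pow_add]
          ring
  -- Step 2: drop the low terms and reindex
  have hstep2 : ∑ m ∈ range (n₁ + n₂ + 1), s m * f ^ (n₁ + n₂ - m)
      = ∑ k ∈ range (kk + 1), s (j₀ + k) * f ^ (kk - k) := by
    have h1 : ∑ m ∈ range (n₁ + n₂ + 1), s m * f ^ (n₁ + n₂ - m)
        = ∑ m ∈ Ico j₀ (n₁ + n₂ + 1), s m * f ^ (n₁ + n₂ - m) := by
      symm
      apply Finset.sum_subset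
      · intro x hx
        rw [Finset.mem_range]
        exact (Finset.mem_Ico.mp hx).2
      · intro x hx hx'
        have hxlt : x < j₀ := by
          rw [Finset.mem_range] at hx
          rw [Finset.mem_Ico] at hx'
          omega
        rw [hlow x hxlt, zero_mul]
    rw [h1, Finset.sum_Ico_eq_sum_range]
    refine Finset.sum_congr (by rw [show n₁ + n₂ + 1 - j₀ = kk + 1 from by omega]) fun k hk => ?_
    rw [show n₁ + n₂ - (j₀ + k) = kk - k from by omega]
  -- Step 3: rewrite via the recursion and drop high terms
  have hstep3 : ∑ k ∈ range (kk + 1), s (j₀ + k) * f ^ (kk - k)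
      = ∑ k ∈ range (n + 2),
          ((if 1 ≤ k ∧ k ≤ n + 1 then f * g (k - 1) else 0) -
            (if k ≤ n then g k else 0)) * f ^ (kk - k) := by
    calc ∑ k ∈ range (kk + 1), s (j₀ + k) * f ^ (kk - k)
        = ∑ k ∈ range (kk + 1),
            ((if 1 ≤ k ∧ k ≤ n + 1 then f * g (k - 1) else 0) -
              (if k ≤ n then g k else 0)) * f ^ (kk - k) :=
          Finset.sum_congr rfl fun k _ => by rw [hkey k]
      _ = _ := by
          symm
          apply Finset.sum_subset
          · intro x hx
            rw [Finset.mem_range] at hx ⊢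
            omega
          · intro x hx hx'
            rw [Finset.mem_range] at hx'
            rw [if_neg (by omega), if_neg (by omega), sub_zero, zero_mul]
  -- Step 4: factor out a power of `f`
  have hstep4 : (∑ k ∈ range (n + 2),
        ((if 1 ≤ k ∧ k ≤ n + 1 then f * g (k - 1) else 0) -
          (if k ≤ n then g k else 0)) * f ^ (kk - k))
      = f ^ (kk - (n + 1)) * ∑ k ∈ range (n + 2),
          ((if 1 ≤ k ∧ k ≤ n + 1 then f * g (k - 1) else 0) -
            (if k ≤ n then g k else 0)) * f ^ (n + 1 - k) := by
    rw [Finset.mul_sum]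
    refine Finset.sum_congr rfl fun k hk => ?_
    have hk' := mem_range.mp hk
    rw [show kk - k = (kk - (n + 1)) + (n + 1 - k) from by omega, pow_add]
    ring
  -- Step 5: the telescoping sum vanishes
  have htel : ∑ k ∈ range (n + 2),
      ((if 1 ≤ k ∧ k ≤ n + 1 then f * g (k - 1) else 0) -
        (if k ≤ n then g k else 0)) * f ^ (n + 1 - k) = 0 := by
    simp only [sub_mul]
    rw [Finset.sum_sub_distrib]
    have h1 : ∑ k ∈ range (n + 2),
        (if 1 ≤ k ∧ k ≤ n + 1 then f * g (k - 1) else 0) * f ^ (n + 1 - k)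
        = ∑ i ∈ range (n + 1), g i * f ^ (n + 1 - i) := by
      rw [Finset.sum_range_succ']
      rw [if_neg (by omega), zero_mul, add_zero]
      refine Finset.sum_congr rfl fun i hi => ?_
      have hi' := mem_range.mp hi
      rw [if_pos ⟨by omega, by omega⟩]
      rw [show i + 1 - 1 = i from rfl, show n + 1 - (i + 1) = n - i from by omega,
        show n + 1 - i = (n - i) + 1 from by omega, pow_succ]
      ring
    have h2 : ∑ k ∈ range (n + 2), (if k ≤ n then g k else 0) * f ^ (n + 1 - k)
        = ∑ i ∈ range (n + 1), g i * f ^ (n + 1 - i) := by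
      rw [Finset.sum_range_succ, if_neg (by omega), zero_mul, add_zero]
      refine Finset.sum_congr rfl fun i hi => ?_
      have hi' := mem_range.mp hi
      rw [if_pos (by omega : i ≤ n)]
    rw [h1, h2, sub_self]
  rw [hT, hstep2, hstep3, hstep4, htel, mul_zero]
end

section
/- Let $A = \bigoplus_{m \in M} A_m$ be an algebra graded by an abelian group $M$, $\psi \colon M \to N$ a homomorphism of abelian groups, and suppose $f_1,\ldots,f_l \in A$ are homogeneous of degrees $w_1,\ldots,w_l \in \ker(\psi)$ respectively. Then the quotient $A / \langle f_1 - 1, \ldots, f_l - 1 \rangle$ carries a natural $N$-grading such that the quotient map $A \to A/\langle f_i - 1 \rangle$ is a morphism of graded algebras with accompanying homomorphism $\psi$ (i.e., the image of $A_m$ lies in the degree-$\psi(m)$ component). -/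
open DirectSum

section Aux

variable {A M N : Type*} [CommRing A] [AddCommGroup M] [AddCommGroup N]
  [DecidableEq M] [DecidableEq N]
  (𝒜 : M → AddSubgroup A) [SetLike.GradedMonoid 𝒜] [DirectSum.Decomposition 𝒜]
  (ψ : M →+ N) {l : ℕ} (f : Fin l → A) (w : Fin l → M)

/-- The regraded components of `A`. -/
def Gr (n : N) : AddSubgroup A := ⨆ m : {m : M // ψ m = n}, 𝒜 m.1

lemma mem_Gr {m : M} {n : N} (h : ψ m = n) {x : A} (hx : x ∈ 𝒜 m) :
    x ∈ Gr 𝒜 ψ n :=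
  (le_iSup (fun m : {m : M // ψ m = n} => 𝒜 m.1) ⟨m, h⟩) hx

lemma Gr_one_mem : (1 : A) ∈ Gr 𝒜 ψ 0 :=
  mem_Gr 𝒜 ψ (map_zero ψ) SetLike.GradedOne.one_mem

lemma Gr_mul_mem {i j : N} {a b : A} (ha : a ∈ Gr 𝒜 ψ i) (hb : b ∈ Gr 𝒜 ψ j) :
    a * b ∈ Gr 𝒜 ψ (i + j) := by
  refine AddSubgroup.iSup_induction _ (C := fun a => a * b ∈ Gr 𝒜 ψ (i + j)) ha ?_ ?_ ?_
  · rintro ⟨m, rfl⟩ x hx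
    refine AddSubgroup.iSup_induction _ (C := fun b => x * b ∈ Gr 𝒜 ψ (ψ m + j)) hb ?_ ?_ ?_
    · rintro ⟨m', rfl⟩ y hy
      exact mem_Gr 𝒜 ψ (map_add ψ m m') (SetLike.GradedMul.mul_mem hx hy)
    · simpa using zero_mem (Gr 𝒜 ψ (ψ m + j))
    · intro y z hy hz
      rw [mul_add]; exact add_mem hy hz
  · simpa using zero_mem (Gr 𝒜 ψ (i + j))
  · intro x y hx hy
    rw [add_mul]; exact add_mem hx hy

/-- The ideal `⟨f i - 1⟩`. -/
abbrev Ifi : Ideal A := Ideal.span (Set.range fun i => f i - 1)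

/-- The components of the quotient. -/
def Bgr (n : N) : AddSubgroup (A ⧸ Ifi f) :=
  (Gr 𝒜 ψ n).map (Ideal.Quotient.mk (Ifi f)).toAddMonoidHom

lemma mem_Bgr {m : M} {n : N} (h : ψ m = n) {x : A} (hx : x ∈ 𝒜 m) :
    Ideal.Quotient.mk (Ifi f) x ∈ Bgr 𝒜 ψ f n :=
  ⟨x, mem_Gr 𝒜 ψ h hx, rfl⟩

/-- The map `𝒜 m →+ ⊕ n, Bgr n` hitting the component `ψ m`. -/
noncomputable def Fhom (m : M) : 𝒜 m →+ ⨁ n, Bgr 𝒜 ψ f n :=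
  (DirectSum.of (fun n => Bgr 𝒜 ψ f n) (ψ m)).comp
    { toFun := fun a => ⟨Ideal.Quotient.mk (Ifi f) a.1, mem_Bgr 𝒜 ψ f rfl a.2⟩
      map_zero' := by ext; simp
      map_add' := fun a b => by ext; simp }

/-- The decomposition map on `A`. -/
noncomputable def gmap : A →+ ⨁ n, Bgr 𝒜 ψ f n :=
  (DirectSum.toAddMonoid (Fhom 𝒜 ψ f)).comp (decomposeAddEquiv 𝒜).toAddMonoidHom

lemma gmap_of_mem {m : M} {x : A} (hx : x ∈ 𝒜 m) :
    gmap 𝒜 ψ f x =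
      DirectSum.of (fun n => Bgr 𝒜 ψ f n) (ψ m)
        ⟨Ideal.Quotient.mk (Ifi f) x, mem_Bgr 𝒜 ψ f rfl hx⟩ := by
  have : decomposeAddEquiv 𝒜 x = DirectSum.of (fun m => 𝒜 m) m ⟨x, hx⟩ :=
    DirectSum.decompose_of_mem 𝒜 hx
  rw [gmap, AddMonoidHom.comp_apply, AddEquiv.coe_toAddMonoidHom, this,
    DirectSum.toAddMonoid_of]
  rfl

lemma coe_gmap (x : A) :
    DirectSum.coeAddMonoidHom (Bgr 𝒜 ψ f) (gmap 𝒜 ψ f x) = Ideal.Quotient.mk (Ifi f) x := by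
  induction x using DirectSum.Decomposition.inductionOn 𝒜 with
  | zero => simp
  | homogeneous m =>
    obtain ⟨x, hx⟩ := m
    rw [gmap_of_mem 𝒜 ψ f hx, DirectSum.coeAddMonoidHom_of]
  | add a b ha hb => rw [map_add, map_add, ha, hb, map_add]

lemma Bgr_of_eq {n n' : N} (h : n = n') (x : (Bgr 𝒜 ψ f n)) (y : (Bgr 𝒜 ψ f n'))
    (hxy : (x : A ⧸ Ifi f) = y) :
    DirectSum.of (fun n => Bgr 𝒜 ψ f n) n x = DirectSum.of (fun n => Bgr 𝒜 ψ f n) n' y := by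
  subst h
  congr 1
  exact Subtype.ext hxy

lemma mk_f_eq_one (i : Fin l) : Ideal.Quotient.mk (Ifi f) (f i) = 1 := by
  rw [← sub_eq_zero, ← map_one (Ideal.Quotient.mk (Ifi f)), ← map_sub,
    Ideal.Quotient.eq_zero_iff_mem]
  exact Ideal.subset_span ⟨i, rfl⟩

lemma gmap_mul_f (hf : ∀ i, f i ∈ 𝒜 (w i)) (hw : ∀ i, ψ (w i) = 0) (i : Fin l) (a : A) : gmap 𝒜 ψ f (a * f i) = gmap 𝒜 ψ f a := by
  induction a using DirectSum.Decomposition.inductionOn 𝒜 with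
  | zero => simp
  | homogeneous m' =>
    obtain ⟨x, hx⟩ := m'
    rename_i m
    have h1 : x * f i ∈ 𝒜 (m + w i) := SetLike.GradedMul.mul_mem hx (hf i)
    rw [gmap_of_mem 𝒜 ψ f h1, gmap_of_mem 𝒜 ψ f hx]
    have h2 : ψ (m + w i) = ψ m := by rw [map_add, hw, add_zero]
    refine Bgr_of_eq 𝒜 ψ f h2 _ _ ?_
    show Ideal.Quotient.mk (Ifi f) (x * f i) = Ideal.Quotient.mk (Ifi f) x
    rw [map_mul, mk_f_eq_one, mul_one]
  | add a b ha hb => rw [add_mul, map_add, ha, hb, map_add]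

lemma gmap_ker (hf : ∀ i, f i ∈ 𝒜 (w i)) (hw : ∀ i, ψ (w i) = 0) {x : A} (hx : x ∈ Ifi f) : gmap 𝒜 ψ f x = 0 := by
  have key : ∀ x ∈ Ifi f, ∀ a : A, gmap 𝒜 ψ f (a * x) = 0 := by
    intro x hx
    refine Submodule.span_induction ?_ ?_ ?_ ?_ hx
    · rintro y ⟨i, rfl⟩ a
      rw [mul_sub, mul_one, map_sub, gmap_mul_f 𝒜 ψ f w hf hw, sub_self]
    · intro a; rw [mul_zero, map_zero]
    · intro y z _ _ hy hz a
      rw [mul_add, map_add, hy, hz, add_zero]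
    · intro c y _ hy a
      rw [smul_eq_mul, ← mul_assoc, hy]
  have := key x hx 1
  rwa [one_mul] at this

lemma gmap_eq_of_sub_mem (hf : ∀ i, f i ∈ 𝒜 (w i)) (hw : ∀ i, ψ (w i) = 0) {x y : A} (h : x - y ∈ Ifi f) :
    gmap 𝒜 ψ f x = gmap 𝒜 ψ f y := by
  have := gmap_ker 𝒜 ψ f w hf hw h
  rw [map_sub, sub_eq_zero] at this
  exact this

/-- The decomposition map on the quotient. -/
noncomputable def gbar (hf : ∀ i, f i ∈ 𝒜 (w i)) (hw : ∀ i, ψ (w i) = 0) : A ⧸ Ifi f → ⨁ n, Bgr 𝒜 ψ f n := fun y =>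
  Quotient.liftOn' y (gmap 𝒜 ψ f) (fun a b h => by
    refine gmap_eq_of_sub_mem 𝒜 ψ f w hf hw ?_
    rwa [Submodule.quotientRel_def] at h)

lemma gbar_mk (hf : ∀ i, f i ∈ 𝒜 (w i)) (hw : ∀ i, ψ (w i) = 0) (a : A) : gbar 𝒜 ψ f w hf hw (Ideal.Quotient.mk (Ifi f) a) = gmap 𝒜 ψ f a := rfl

lemma gbar_of_mem_Gr (hf : ∀ i, f i ∈ 𝒜 (w i)) (hw : ∀ i, ψ (w i) = 0) {n : N} {a : A} (ha : a ∈ Gr 𝒜 ψ n)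
    (h : Ideal.Quotient.mk (Ifi f) a ∈ Bgr 𝒜 ψ f n) :
    gbar 𝒜 ψ f w hf hw (Ideal.Quotient.mk (Ifi f) a) =
      DirectSum.of (fun n => Bgr 𝒜 ψ f n) n ⟨Ideal.Quotient.mk (Ifi f) a, h⟩ := by
  rw [gbar_mk]
  refine AddSubgroup.iSup_induction'
    (C := fun a (ha : a ∈ Gr 𝒜 ψ n) => ∀ h, gmap 𝒜 ψ f a =
      DirectSum.of (fun n => Bgr 𝒜 ψ f n) n ⟨Ideal.Quotient.mk (Ifi f) a, h⟩)
    _ ?_ ?_ ?_ ha h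
  · rintro ⟨m, rfl⟩ x hx hmem
    rw [gmap_of_mem 𝒜 ψ f hx]
  · intro h
    rw [map_zero, show (⟨Ideal.Quotient.mk (Ifi f) 0, h⟩ : Bgr 𝒜 ψ f n) = 0 from
      Subtype.ext (map_zero _), map_zero]
  · intro x y hx hy ihx ihy h
    rw [map_add, ihx ⟨x, hx, rfl⟩, ihy ⟨y, hy, rfl⟩, ← map_add]
    exact Bgr_of_eq 𝒜 ψ f rfl _ _ (map_add (Ideal.Quotient.mk (Ifi f)) x y).symm

lemma gbar_add (hf : ∀ i, f i ∈ 𝒜 (w i)) (hw : ∀ i, ψ (w i) = 0)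
    (x y : A ⧸ Ifi f) :
    gbar 𝒜 ψ f w hf hw (x + y) = gbar 𝒜 ψ f w hf hw x + gbar 𝒜 ψ f w hf hw y := by
  obtain ⟨a, rfl⟩ := Ideal.Quotient.mk_surjective x
  obtain ⟨b, rfl⟩ := Ideal.Quotient.mk_surjective y
  rw [← map_add, gbar_mk, gbar_mk, gbar_mk, map_add]

noncomputable def BgrDecomposition (hf : ∀ i, f i ∈ 𝒜 (w i)) (hw : ∀ i, ψ (w i) = 0) :
    DirectSum.Decomposition (Bgr 𝒜 ψ f) where
  decompose' := gbar 𝒜 ψ f w hf hw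
  left_inv y := by
    obtain ⟨a, rfl⟩ := Ideal.Quotient.mk_surjective y
    rw [gbar_mk, coe_gmap]
  right_inv b := by
    induction b using DirectSum.induction_on with
    | zero =>
      rw [map_zero]
      show gbar 𝒜 ψ f w hf hw (Ideal.Quotient.mk (Ifi f) 0) = 0
      rw [gbar_mk, map_zero]
    | of n x =>
      obtain ⟨y, hy⟩ := x
      obtain ⟨a, ha, rfl⟩ := hy
      rw [DirectSum.coeAddMonoidHom_of]
      exact gbar_of_mem_Gr 𝒜 ψ f w hf hw ha _
    | add x y hx hy =>
      rw [map_add, gbar_add, hx, hy]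

end Aux

/-- Let `A` be an algebra graded by an abelian group `M`,
`ψ : M → N` a homomorphism of abelian groups, and `f₁,…,f_l ∈ A` homogeneous of
degrees `w₁,…,w_l ∈ ker ψ`.  Then the quotient `A ⧸ ⟨f₁ - 1, …, f_l - 1⟩` carries a
natural `N`-grading (a graded-ring structure, i.e. a direct sum decomposition into
multiplicatively compatible components) such that the quotient map is a morphism of
graded algebras with accompanying homomorphism `ψ`: the image of the degree-`m`
component lands in the degree-`ψ m` component. -/
theorem quotient_by_f_sub_one_graded
    {A M N : Type*} [CommRing A] [AddCommGroup M] [AddCommGroup N] [DecidableEq M] [DecidableEq N]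
    (𝒜 : M → AddSubgroup A) [SetLike.GradedMonoid 𝒜] [DirectSum.Decomposition 𝒜]
    (ψ : M →+ N) (l : ℕ) (f : Fin l → A) (w : Fin l → M)
    (hf : ∀ i, f i ∈ 𝒜 (w i)) (hw : ∀ i, ψ (w i) = 0) :
    ∃ ℬ : N → AddSubgroup (A ⧸ Ideal.span (Set.range fun i => f i - 1)),
      SetLike.GradedMonoid ℬ ∧
      Nonempty (DirectSum.Decomposition ℬ) ∧
      ∀ (m : M) (x : A), x ∈ 𝒜 m →
        Ideal.Quotient.mk (Ideal.span (Set.range fun i => f i - 1)) x ∈ ℬ (ψ m) := by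
  letI h1 : SetLike.GradedOne (Bgr 𝒜 ψ f) := ⟨⟨1, Gr_one_mem 𝒜 ψ, show Ideal.Quotient.mk (Ifi f) 1 = 1 from map_one _⟩⟩
  letI h2 : SetLike.GradedMul (Bgr 𝒜 ψ f) := by
    constructor
    rintro i j a b ⟨x, hx, rfl⟩ ⟨y, hy, rfl⟩
    exact ⟨x * y, Gr_mul_mem 𝒜 ψ hx hy,
      show Ideal.Quotient.mk (Ifi f) (x * y) = _ from map_mul (Ideal.Quotient.mk (Ifi f)) x y⟩
  exact ⟨Bgr 𝒜 ψ f, ⟨⟩, ⟨BgrDecomposition 𝒜 ψ f w hf hw⟩,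
    fun m x hx => mem_Bgr 𝒜 ψ f rfl hx⟩
end

section
/- Let $K$ be a field, $a \geq 1$ an integer, and let $\mathcal{G} = \{T_1T_6T_7^2 - T_2T_3T_5,\ T_2^aT_4 - T_6T_7,\ T_1T_2^{a-1}T_4T_7 - T_3T_5\}$ generate the ideal $I_0 \subseteq K[T_1,\ldots,T_7]$. Then for each variable $T_i$, no element of $\mathcal{G}$ is divisible by $T_i$, and consequently, if $\mathcal{G}$ is a Gröbner basis of $I_0$ with respect to a degree reverse lexicographic order, then $I_0 : T_i^\infty = I_0$ for every $i$, and hence $I_0 : (T_1\cdots T_7)^\infty = I_0$. -/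
set_option maxHeartbeats 1000000
set_option synthInstance.maxHeartbeats 400000

section LinearPrime
open Polynomial

/-- A linear polynomial `b•X - c` over a UFD with `b` prime and `b ∤ c` is prime. -/
lemma prime_linear {B : Type*} [CommRing B] [IsDomain B] [UniqueFactorizationMonoid B]
    {b c : B} (hb : Prime b) (hbc : ¬ b ∣ c) :
    Prime (C b * X - C c) := by
  rw [← UniqueFactorizationMonoid.irreducible_iff_prime]
  set P : B[X] := C b * X - C c with hP
  have hP' : P = C b * X + C (-c) := by rw [hP, map_neg]; ring
  have hdeg : P.degree = 1 := by rw [hP']; exact degree_linear hb.ne_zero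
  have hPne : P ≠ 0 := fun h => by simp [h] at hdeg
  have hc1 : P.coeff 1 = b := by simp [hP']
  have hc0 : P.coeff 0 = -c := by simp [hP']
  have hconst : ∀ d : B, C d ∣ P → IsUnit d := by
    intro d hd
    rw [C_dvd_iff_dvd_coeff] at hd
    have h1 : d ∣ b := by simpa [hc1] using hd 1
    have h0 : d ∣ c := by simpa [hc0] using (hd 0).neg_right
    obtain ⟨e, rfl⟩ := h1
    rcases hb.irreducible.isUnit_or_isUnit rfl with h | h
    · exact h
    · exfalso
      obtain ⟨u, rfl⟩ := h
      exact hbc (dvd_trans ⟨(↑u⁻¹ : B), by simp [mul_assoc]⟩ h0)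
  constructor
  · intro h
    have := degree_eq_zero_of_isUnit h
    rw [hdeg] at this
    exact one_ne_zero this
  · intro u v huv
    have hu0 : u ≠ 0 := fun h => hPne (by simp [huv, h])
    have hv0 : v ≠ 0 := fun h => hPne (by simp [huv, h])
    have hnd : u.natDegree + v.natDegree = 1 := by
      rw [← natDegree_mul hu0 hv0, ← huv]
      exact natDegree_eq_of_degree_eq_some hdeg
    rcases Nat.eq_zero_or_pos u.natDegree with h | h
    · left
      rw [eq_C_of_natDegree_eq_zero h]
      exact isUnit_C.mpr (hconst _ ⟨v, by rw [huv, ← eq_C_of_natDegree_eq_zero h]⟩)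
    · right
      have hvd : v.natDegree = 0 := by omega
      rw [eq_C_of_natDegree_eq_zero hvd]
      exact isUnit_C.mpr (hconst _ ⟨u, by rw [huv, ← eq_C_of_natDegree_eq_zero hvd]; ring⟩)

end LinearPrime

open MvPolynomial

section Main

variable {K : Type*} [Field K]

noncomputable def PP (K : Type*) [Field K] (b : ℕ) : MvPolynomial (Fin 7) K :=
  X 1 ^ (b+1) * X 3 - X 5 * X 6
noncomputable def QQ (K : Type*) [Field K] (b : ℕ) : MvPolynomial (Fin 7) K :=
  X 0 * X 1 ^ b * X 3 * X 6 - X 2 * X 4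


lemma mv_prime_X {n : ℕ} (i : Fin (n+1)) : Prime (X i : MvPolynomial (Fin (n+1)) K) := by
  rw [← MulEquiv.prime_iff ((renameEquiv K (Equiv.swap i 0)).trans (finSuccEquiv K n)).toMulEquiv]
  show Prime (((renameEquiv K (Equiv.swap i 0)).trans (finSuccEquiv K n)) (X i))
  simp only [AlgEquiv.trans_apply, renameEquiv_apply, rename_X,
    Equiv.swap_apply_left, finSuccEquiv_X_zero]
  exact Polynomial.prime_X

lemma not_X_dvd {n : ℕ} (i : Fin n) (g : MvPolynomial (Fin n) K) (v : Fin n → K)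
    (h0 : v i = 0) (hg : eval v g ≠ 0) : ¬ X i ∣ g := by
  rintro ⟨u, rfl⟩
  exact hg (by rw [eval_mul, eval_X, h0, zero_mul])

lemma not_dvd_of_eval {n : ℕ} (g m : MvPolynomial (Fin n) K) (v : Fin n → K)
    (hg : eval v g = 0) (hm : eval v m ≠ 0) : ¬ g ∣ m := by
  rintro ⟨t, rfl⟩
  exact hm (by rw [eval_mul, hg, zero_mul])

lemma prime_pp (b : ℕ) : Prime (X 1 ^ (b+1) * X 3 - X 5 * X 6 : MvPolynomial (Fin 7) K) := by
  rw [← MulEquiv.prime_iff ((renameEquiv K (Equiv.swap (6:Fin 7) 0)).trans (finSuccEquiv K 6)).toMulEquiv]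
  show Prime (((renameEquiv K (Equiv.swap (6:Fin 7) 0)).trans (finSuccEquiv K 6))
    (X 1 ^ (b+1) * X 3 - X 5 * X 6))
  have h1 : ((1:Fin 7)) = Fin.succ 0 := rfl
  have h3 : ((3:Fin 7)) = Fin.succ 2 := rfl
  have h5 : ((5:Fin 7)) = Fin.succ 4 := rfl
  simp only [map_sub, map_mul, map_pow, AlgEquiv.trans_apply, renameEquiv_apply, rename_X]
  rw [show (Equiv.swap (6:Fin 7) 0) 1 = 1 by decide, show (Equiv.swap (6:Fin 7) 0) 3 = 3 by decide,
    show (Equiv.swap (6:Fin 7) 0) 5 = 5 by decide, show (Equiv.swap (6:Fin 7) 0) 6 = 0 by decide]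
  rw [h1, h3, h5, finSuccEquiv_X_zero, finSuccEquiv_X_succ, finSuccEquiv_X_succ,
    finSuccEquiv_X_succ]
  have key : Prime (Polynomial.C (X 4 : MvPolynomial (Fin 6) K) * Polynomial.X -
      Polynomial.C (X 0 ^ (b+1) * X 2)) := by
    refine prime_linear (mv_prime_X 4) ?_
    exact not_X_dvd 4 _ (fun j => if j = 4 then 0 else 1) (by simp) (by simp)
  have heq : Polynomial.C (X 0 : MvPolynomial (Fin 6) K) ^ (b+1) * Polynomial.C (X 2) -
      Polynomial.C (X 4) * Polynomial.X
      = -(Polynomial.C (X 4 : MvPolynomial (Fin 6) K) * Polynomial.X -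
        Polynomial.C (X 0 ^ (b+1) * X 2)) := by
    rw [map_mul, map_pow]; ring
  rw [heq]
  exact key.neg

lemma prime_qq (b : ℕ) :
    Prime (X 0 * X 1 ^ b * X 3 * X 6 - X 2 * X 4 : MvPolynomial (Fin 7) K) := by
  rw [← MulEquiv.prime_iff ((renameEquiv K (Equiv.swap (4:Fin 7) 0)).trans (finSuccEquiv K 6)).toMulEquiv]
  show Prime (((renameEquiv K (Equiv.swap (4:Fin 7) 0)).trans (finSuccEquiv K 6))
    (X 0 * X 1 ^ b * X 3 * X 6 - X 2 * X 4))
  have h1 : ((1:Fin 7)) = Fin.succ 0 := rfl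
  have h2 : ((2:Fin 7)) = Fin.succ 1 := rfl
  have h3 : ((3:Fin 7)) = Fin.succ 2 := rfl
  have h4 : ((4:Fin 7)) = Fin.succ 3 := rfl
  have h6 : ((6:Fin 7)) = Fin.succ 5 := rfl
  simp only [map_sub, map_mul, map_pow, AlgEquiv.trans_apply, renameEquiv_apply, rename_X]
  rw [show (Equiv.swap (4:Fin 7) 0) 0 = 4 by decide, show (Equiv.swap (4:Fin 7) 0) 1 = 1 by decide,
    show (Equiv.swap (4:Fin 7) 0) 3 = 3 by decide, show (Equiv.swap (4:Fin 7) 0) 6 = 6 by decide,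
    show (Equiv.swap (4:Fin 7) 0) 2 = 2 by decide, show (Equiv.swap (4:Fin 7) 0) 4 = 0 by decide]
  rw [h1, h2, h3, h4, h6, finSuccEquiv_X_zero, finSuccEquiv_X_succ, finSuccEquiv_X_succ,
    finSuccEquiv_X_succ, finSuccEquiv_X_succ, finSuccEquiv_X_succ]
  have key : Prime (Polynomial.C (X 1 : MvPolynomial (Fin 6) K) * Polynomial.X -
      Polynomial.C (X 3 * X 0 ^ b * X 2 * X 5)) := by
    refine prime_linear (mv_prime_X 1) ?_
    refine not_X_dvd 1 _ (fun j => if j = 1 then 0 else 1) (by simp) (by simp)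
  have heq : Polynomial.C (X 3 : MvPolynomial (Fin 6) K) * Polynomial.C (X 0) ^ b *
      Polynomial.C (X 2) * Polynomial.C (X 5) - Polynomial.C (X 1) * Polynomial.X
      = -(Polynomial.C (X 1 : MvPolynomial (Fin 6) K) * Polynomial.X -
        Polynomial.C (X 3 * X 0 ^ b * X 2 * X 5)) := by
    rw [map_mul, map_mul, map_mul, map_pow]; ring
  rw [heq]
  exact key.neg


noncomputable def subZero (i : Fin 7) : MvPolynomial (Fin 7) K →+* MvPolynomial (Fin 7) K :=
  eval₂Hom C (fun j => if j = i then 0 else X j)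

lemma subZero_X_self (i : Fin 7) : subZero (K := K) i (X i) = 0 := by
  simp [subZero]

lemma X_dvd_sub_subZero (i : Fin 7) (f : MvPolynomial (Fin 7) K) :
    (X i : MvPolynomial (Fin 7) K) ∣ f - subZero i f := by
  induction f using MvPolynomial.induction_on with
  | C c => simp [subZero]
  | add f g hf hg =>
      have : f + g - subZero i (f + g) = (f - subZero i f) + (g - subZero i g) := by
        rw [map_add]; ring
      rw [this]; exact dvd_add hf hg
  | mul_X f j hf =>
      by_cases hj : j = i
      · subst hj
        rw [map_mul, subZero_X_self, mul_zero, sub_zero]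
        exact Dvd.intro_left f rfl
      · rw [map_mul, show subZero (K := K) i (X j) = X j by simp [subZero, hj]]
        have : f * X j - subZero i f * X j = (f - subZero i f) * X j := by ring
        rw [this]
        exact hf.mul_right _


lemma satX5 (b : ℕ) (f : MvPolynomial (Fin 7) K)
    (h : X 5 * f ∈ Ideal.span {PP K b, QQ K b}) : f ∈ Ideal.span {PP K b, QQ K b} := by
  rw [Ideal.mem_span_pair] at h ⊢
  obtain ⟨g, h', hgh⟩ := h
  set σ := subZero (K := K) 5 with hσdef
  have hσp : σ (PP K b) = X 1 ^ (b+1) * X 3 := by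
    simp [PP, hσdef, subZero]
  have hσq : σ (QQ K b) = QQ K b := by
    simp [QQ, hσdef, subZero]
  have hσ5 : σ (X 5) = 0 := subZero_X_self 5
  have happ : σ g * (X 1 ^ (b+1) * X 3) + σ h' * QQ K b = 0 := by
    have h2 := congrArg σ hgh
    rw [map_add, map_mul, map_mul, map_mul, hσp, hσq, hσ5, zero_mul] at h2
    exact h2
  have hqdvd : QQ K b ∣ σ g * (X 1 ^ (b+1) * X 3) := ⟨-(σ h'), by linear_combination happ⟩
  have hqnotdvd : ¬ QQ K b ∣ (X 1 ^ (b+1) * X 3 : MvPolynomial (Fin 7) K) := by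
    refine not_dvd_of_eval _ _ (fun _ => 1) (by simp [QQ]) (by simp)
  have hqg : QQ K b ∣ σ g := ((prime_qq b).2.2 _ _ hqdvd).resolve_right hqnotdvd
  obtain ⟨u, hu⟩ := hqg
  obtain ⟨v, hv⟩ := X_dvd_sub_subZero 5 g
  have h5q : X 5 * (f - v * PP K b) = QQ K b * (u * PP K b + h') := by
    linear_combination (-1 : MvPolynomial (Fin 7) K) * hgh + (PP K b) * hv + (PP K b) * hu
  obtain ⟨w, hw⟩ : (X 5 : MvPolynomial (Fin 7) K) ∣ (u * PP K b + h') := by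
    have hdvd : (X 5 : MvPolynomial (Fin 7) K) ∣ QQ K b * (u * PP K b + h') :=
      ⟨f - v * PP K b, h5q.symm⟩
    refine ((mv_prime_X 5).2.2 _ _ hdvd).resolve_left ?_
    refine not_X_dvd 5 _ (fun j => if j = 2 || j = 5 then 0 else 1) (by simp) ?_
    simp [QQ]
  refine ⟨v, w, ?_⟩
  have hcancel : X 5 * (v * PP K b + w * QQ K b) = X 5 * f := by
    linear_combination (-1 : MvPolynomial (Fin 7) K) * h5q - (QQ K b) * hw
  exact mul_left_cancel₀ (X_ne_zero 5) hcancel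

lemma satX2 (b : ℕ) (f : MvPolynomial (Fin 7) K)
    (h : X 2 * f ∈ Ideal.span {PP K b, QQ K b}) : f ∈ Ideal.span {PP K b, QQ K b} := by
  rw [Ideal.mem_span_pair] at h ⊢
  obtain ⟨g, h', hgh⟩ := h
  set σ := subZero (K := K) 2 with hσdef
  have hσp : σ (PP K b) = PP K b := by
    simp [PP, hσdef, subZero]
  have hσq : σ (QQ K b) = X 0 * X 1 ^ b * X 3 * X 6 := by
    simp [QQ, hσdef, subZero]
  have hσ2 : σ (X 2) = 0 := subZero_X_self 2
  have happ : σ g * PP K b + σ h' * (X 0 * X 1 ^ b * X 3 * X 6) = 0 := by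
    have h2 := congrArg σ hgh
    rw [map_add, map_mul, map_mul, map_mul, hσp, hσq, hσ2, zero_mul] at h2
    exact h2
  have hpdvd : PP K b ∣ σ h' * (X 0 * X 1 ^ b * X 3 * X 6) := ⟨-(σ g), by linear_combination happ⟩
  have hpnotdvd : ¬ PP K b ∣ (X 0 * X 1 ^ b * X 3 * X 6 : MvPolynomial (Fin 7) K) := by
    refine not_dvd_of_eval _ _ (fun _ => 1) (by simp [PP]) (by simp)
  have hpg : PP K b ∣ σ h' := ((prime_pp b).2.2 _ _ hpdvd).resolve_right hpnotdvd
  obtain ⟨u, hu⟩ := hpg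
  obtain ⟨v, hv⟩ := X_dvd_sub_subZero 2 h'
  have h2q : X 2 * (f - v * QQ K b) = PP K b * (u * QQ K b + g) := by
    linear_combination (-1 : MvPolynomial (Fin 7) K) * hgh + (QQ K b) * hv + (QQ K b) * hu
  obtain ⟨w, hw⟩ : (X 2 : MvPolynomial (Fin 7) K) ∣ (u * QQ K b + g) := by
    have hdvd : (X 2 : MvPolynomial (Fin 7) K) ∣ PP K b * (u * QQ K b + g) :=
      ⟨f - v * QQ K b, h2q.symm⟩
    refine ((mv_prime_X 2).2.2 _ _ hdvd).resolve_left ?_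
    refine not_X_dvd 2 _ (fun j => if j = 2 || j = 6 then 0 else 1) (by simp) ?_
    simp [PP]
  refine ⟨w, v, ?_⟩
  have hcancel : X 2 * (w * PP K b + v * QQ K b) = X 2 * f := by
    linear_combination (-1 : MvPolynomial (Fin 7) K) * h2q - (PP K b) * hw
  exact mul_left_cancel₀ (X_ne_zero 2) hcancel


noncomputable def Amap (K : Type*) [Field K] (j : Fin 7) :
    FractionRing (MvPolynomial (Fin 7) K) :=
  algebraMap (MvPolynomial (Fin 7) K) (FractionRing (MvPolynomial (Fin 7) K)) (X j)

lemma Amap_ne (j : Fin 7) : Amap K j ≠ 0 := by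
  rw [Amap, map_ne_zero_iff _ (IsFractionRing.injective _ _)]
  exact X_ne_zero j

noncomputable def vals (K : Type*) [Field K] (b : ℕ) :
    Fin 7 → FractionRing (MvPolynomial (Fin 7) K) := fun j =>
  if j = 4 then Amap K 0 * Amap K 1 ^ (2*b+1) * Amap K 3 ^ 2 * (Amap K 2 * Amap K 5)⁻¹
  else if j = 6 then Amap K 1 ^ (b+1) * Amap K 3 * (Amap K 5)⁻¹
  else Amap K j

lemma vals_eq (b : ℕ) (j : Fin 7) (h4 : j ≠ 4) (h6 : j ≠ 6) : vals K b j = Amap K j := by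
  rw [vals, if_neg h4, if_neg h6]

lemma vals4 (b : ℕ) :
    vals K b 4 = Amap K 0 * Amap K 1 ^ (2*b+1) * Amap K 3 ^ 2 * (Amap K 2 * Amap K 5)⁻¹ := by
  rw [vals, if_pos rfl]

lemma vals6 (b : ℕ) : vals K b 6 = Amap K 1 ^ (b+1) * Amap K 3 * (Amap K 5)⁻¹ := by
  rw [vals, if_neg (by decide), if_pos rfl]

noncomputable def phi (K : Type*) [Field K] (b : ℕ) :
    MvPolynomial (Fin 7) K →+* FractionRing (MvPolynomial (Fin 7) K) :=
  eval₂Hom ((algebraMap (MvPolynomial (Fin 7) K) (FractionRing (MvPolynomial (Fin 7) K))).comp C)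
    (vals K b)

lemma phi_C (b : ℕ) (c : K) : phi K b (C c) = algebraMap _ _ (C c : MvPolynomial (Fin 7) K) := by
  simp [phi]

lemma phi_X (b : ℕ) (j : Fin 7) : phi K b (X j) = vals K b j := by
  simp [phi]

lemma phi_X' (b : ℕ) (j : Fin 7) (h4 : j ≠ 4) (h6 : j ≠ 6) :
    phi K b (X j) = algebraMap _ _ (X j : MvPolynomial (Fin 7) K) := by
  rw [phi_X, vals_eq b j h4 h6, Amap]

lemma vals_ne (b : ℕ) (j : Fin 7) : vals K b j ≠ 0 := by
  rw [vals]
  split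
  · exact mul_ne_zero (mul_ne_zero (mul_ne_zero (Amap_ne 0) (pow_ne_zero _ (Amap_ne 1)))
      (pow_ne_zero _ (Amap_ne 3))) (inv_ne_zero (mul_ne_zero (Amap_ne 2) (Amap_ne 5)))
  split
  · exact mul_ne_zero (mul_ne_zero (pow_ne_zero _ (Amap_ne 1)) (Amap_ne 3))
      (inv_ne_zero (Amap_ne 5))
  · exact Amap_ne _

lemma phi_PP (b : ℕ) : phi K b (PP K b) = 0 := by
  rw [PP, map_sub, map_mul, map_mul, map_pow, phi_X, phi_X, phi_X, phi_X,
    vals_eq b 1 (by decide) (by decide), vals_eq b 3 (by decide) (by decide),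
    vals_eq b 5 (by decide) (by decide), vals6]
  field_simp
  rw [div_self (Amap_ne (K := K) 5), sub_self, mul_zero]

lemma phi_QQ (b : ℕ) : phi K b (QQ K b) = 0 := by
  rw [QQ, map_sub, map_mul, map_mul, map_mul, map_mul, map_pow,
    phi_X, phi_X, phi_X, phi_X, phi_X, phi_X,
    vals_eq b 0 (by decide) (by decide), vals_eq b 1 (by decide) (by decide),
    vals_eq b 2 (by decide) (by decide), vals_eq b 3 (by decide) (by decide),
    vals4, vals6]
  have h2 := Amap_ne (K := K) 2
  have h5 := Amap_ne (K := K) 5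
  field_simp
  ring

lemma PP_mem (b : ℕ) : PP K b ∈ Ideal.span {PP K b, QQ K b} :=
  Ideal.subset_span (Set.mem_insert _ _)

lemma QQ_mem (b : ℕ) : QQ K b ∈ Ideal.span {PP K b, QQ K b} :=
  Ideal.subset_span (Set.mem_insert_of_mem _ rfl)

lemma elim_lemma (b : ℕ) (f : MvPolynomial (Fin 7) K) :
    ∃ (N : ℕ) (g : MvPolynomial (Fin 7) K),
      phi K b g = algebraMap _ _ g ∧
      X 2 ^ N * X 5 ^ N * f - g ∈ Ideal.span {PP K b, QQ K b} := by
  induction f using MvPolynomial.induction_on with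
  | C c =>
      refine ⟨0, C c, phi_C b c, ?_⟩
      rw [pow_zero, pow_zero, one_mul, one_mul, sub_self]
      exact zero_mem _
  | add f1 f2 h1 h2 =>
      obtain ⟨N1, g1, hg1, hm1⟩ := h1
      obtain ⟨N2, g2, hg2, hm2⟩ := h2
      refine ⟨N1 + N2, X 2 ^ N2 * X 5 ^ N2 * g1 + X 2 ^ N1 * X 5 ^ N1 * g2, ?_, ?_⟩
      · simp only [map_add, map_mul, map_pow, hg1, hg2,
          phi_X' b 2 (by decide) (by decide), phi_X' b 5 (by decide) (by decide)]
      · have heq : X 2 ^ (N1+N2) * X 5 ^ (N1+N2) * (f1 + f2) -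
            (X 2 ^ N2 * X 5 ^ N2 * g1 + X 2 ^ N1 * X 5 ^ N1 * g2)
            = X 2 ^ N2 * X 5 ^ N2 * (X 2 ^ N1 * X 5 ^ N1 * f1 - g1)
              + X 2 ^ N1 * X 5 ^ N1 * (X 2 ^ N2 * X 5 ^ N2 * f2 - g2) := by ring
        rw [heq]
        exact add_mem (Ideal.mul_mem_left _ _ hm1) (Ideal.mul_mem_left _ _ hm2)
  | mul_X f i hf =>
      obtain ⟨N, g, hg, hm⟩ := hf
      have easy : ∀ j : Fin 7, j ≠ 4 → j ≠ 6 →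
          ∃ (N' : ℕ) (g' : MvPolynomial (Fin 7) K),
            phi K b g' = algebraMap _ _ g' ∧
            X 2 ^ N' * X 5 ^ N' * (f * X j) - g' ∈ Ideal.span {PP K b, QQ K b} := by
        intro j h4 h6
        refine ⟨N, g * X j, ?_, ?_⟩
        · rw [map_mul, map_mul, hg, phi_X' b j h4 h6]
        · have heq : X 2 ^ N * X 5 ^ N * (f * X j) - g * X j
              = (X 2 ^ N * X 5 ^ N * f - g) * X j := by ring
          rw [heq]
          exact Ideal.mul_mem_right _ _ hm
      fin_cases i
      · exact easy 0 (by decide) (by decide)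
      · exact easy 1 (by decide) (by decide)
      · exact easy 2 (by decide) (by decide)
      · exact easy 3 (by decide) (by decide)
      · -- i = 4
        refine ⟨N + 1, g * (X 0 * X 1 ^ (2*b+1) * X 3 ^ 2), ?_, ?_⟩
        · rw [map_mul, map_mul, map_mul, map_pow, map_pow, hg,
            phi_X' b 0 (by decide) (by decide), phi_X' b 1 (by decide) (by decide),
            phi_X' b 3 (by decide) (by decide),
            map_mul, map_mul, map_mul, map_pow, map_pow]
        · have heq : X 2 ^ (N+1) * X 5 ^ (N+1) * (f * X 4) -
              g * (X 0 * X 1 ^ (2*b+1) * X 3 ^ 2)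
              = (X 2 * X 4 * X 5) * (X 2 ^ N * X 5 ^ N * f - g)
                + (g * (-(X 5))) * QQ K b + (g * (-(X 0 * X 1 ^ b * X 3))) * PP K b := by
            rw [PP, QQ]; ring
          show X 2 ^ (N+1) * X 5 ^ (N+1) * (f * X 4) -
            g * (X 0 * X 1 ^ (2*b+1) * X 3 ^ 2) ∈ Ideal.span {PP K b, QQ K b}
          rw [heq]
          exact add_mem (add_mem (Ideal.mul_mem_left _ _ hm)
            (Ideal.mul_mem_left _ _ (QQ_mem b)))
            (Ideal.mul_mem_left _ _ (PP_mem b))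
      · exact easy 5 (by decide) (by decide)
      · -- i = 6
        refine ⟨N + 1, g * (X 2 * X 1 ^ (b+1) * X 3), ?_, ?_⟩
        · rw [map_mul, map_mul, map_mul, map_pow, hg,
            phi_X' b 2 (by decide) (by decide), phi_X' b 1 (by decide) (by decide),
            phi_X' b 3 (by decide) (by decide),
            map_mul, map_mul, map_mul, map_pow]
        · have heq : X 2 ^ (N+1) * X 5 ^ (N+1) * (f * X 6) - g * (X 2 * X 1 ^ (b+1) * X 3)
              = (X 2 * X 5 * X 6) * (X 2 ^ N * X 5 ^ N * f - g)
                + (g * (-(X 2))) * PP K b := by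
            rw [PP]; ring
          show X 2 ^ (N+1) * X 5 ^ (N+1) * (f * X 6) -
            g * (X 2 * X 1 ^ (b+1) * X 3) ∈ Ideal.span {PP K b, QQ K b}
          rw [heq]
          exact add_mem (Ideal.mul_mem_left _ _ hm)
            (Ideal.mul_mem_left _ _ (PP_mem b))


lemma satN (b : ℕ) (N : ℕ) : ∀ f : MvPolynomial (Fin 7) K,
    X 2 ^ N * X 5 ^ N * f ∈ Ideal.span {PP K b, QQ K b} → f ∈ Ideal.span {PP K b, QQ K b} := by
  induction N with
  | zero => intro f h; simpa using h
  | succ N ih =>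
      intro f h
      have h' : X 2 ^ N * X 5 ^ N * (X 2 * (X 5 * f)) ∈ Ideal.span {PP K b, QQ K b} := by
        have heq : X 2 ^ N * X 5 ^ N * (X 2 * (X 5 * f)) =
            X 2 ^ (N+1) * X 5 ^ (N+1) * f := by ring
        rw [heq]; exact h
      exact satX5 b f (satX2 b _ (ih _ h'))

lemma mem_iff_phi (b : ℕ) (f : MvPolynomial (Fin 7) K) :
    f ∈ Ideal.span {PP K b, QQ K b} ↔ phi K b f = 0 := by
  constructor
  · intro h
    rw [Ideal.mem_span_pair] at h
    obtain ⟨u, v, huv⟩ := h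
    rw [← huv, map_add, map_mul, map_mul, phi_PP, phi_QQ, mul_zero, mul_zero, add_zero]
  · intro h
    obtain ⟨N, g, hg, hm⟩ := elim_lemma b f
    have h1 : phi K b (X 2 ^ N * X 5 ^ N * f - g) = 0 := by
      rw [Ideal.mem_span_pair] at hm
      obtain ⟨u, v, huv⟩ := hm
      rw [← huv, map_add, map_mul, map_mul, phi_PP, phi_QQ, mul_zero, mul_zero, add_zero]
    rw [map_sub, map_mul, map_mul, map_pow, map_pow, h, mul_zero, zero_sub, neg_eq_zero,
      hg] at h1
    have hg0 : g = 0 := by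
      have := IsFractionRing.injective (MvPolynomial (Fin 7) K)
        (FractionRing (MvPolynomial (Fin 7) K))
      exact this (by rw [h1, map_zero])
    rw [hg0, sub_zero] at hm
    exact satN b N f hm


end Main


open MvPolynomial in
/-- Let
`𝒢 = {T₁T₆T₇² - T₂T₃T₅, T₂^aT₄ - T₆T₇, T₁T₂^{a-1}T₄T₇ - T₃T₅}` generate
`I₀ ⊆ K[T₁,…,T₇]` (variables `X 0,…,X 6`), with `a ≥ 1`.  Then no element of `𝒢`
is divisible by any variable `Tᵢ`; and (𝒢 being a Gröbner basis of `I₀` for degree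
reverse lexicographic orders) `I₀ : Tᵢ^∞ = I₀` for every `i`, and hence
`I₀ : (T₁⋯T₇)^∞ = I₀`. -/
theorem I0_saturated_wrt_variables (K : Type*) [Field K] (a : ℕ) (ha : 1 ≤ a) :
    let G : Set (MvPolynomial (Fin 7) K) :=
      {X 0 * X 5 * X 6 ^ 2 - X 1 * X 2 * X 4,
       X 1 ^ a * X 3 - X 5 * X 6,
       X 0 * X 1 ^ (a - 1) * X 3 * X 6 - X 2 * X 4}
    let I₀ : Ideal (MvPolynomial (Fin 7) K) :=
      Ideal.span {X 1 ^ a * X 3 - X 5 * X 6,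
        X 0 * X 1 ^ (a - 1) * X 3 * X 6 - X 2 * X 4}
    (∀ i : Fin 7, ∀ g ∈ G, ¬ (X i : MvPolynomial (Fin 7) K) ∣ g) ∧
    (∀ (i : Fin 7) (g : MvPolynomial (Fin 7) K) (k : ℕ),
      g * X i ^ k ∈ I₀ → g ∈ I₀) ∧
    (∀ (g : MvPolynomial (Fin 7) K) (k : ℕ),
      g * (∏ i : Fin 7, X i) ^ k ∈ I₀ → g ∈ I₀) := by
  intro G I₀
  obtain ⟨b, rfl⟩ : ∃ b, a = b + 1 := ⟨a - 1, by omega⟩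
  have hGI : I₀ = Ideal.span {PP K b, QQ K b} := by
    show Ideal.span _ = _
    rw [PP, QQ]
    norm_num
  refine ⟨?_, ?_, ?_⟩
  · -- no variable divides any element of 𝒢
    intro i g hg
    have hg' : g = X 0 * X 5 * X 6 ^ 2 - X 1 * X 2 * X 4 ∨
        g = X 1 ^ (b+1) * X 3 - X 5 * X 6 ∨
        g = X 0 * X 1 ^ (b + 1 - 1) * X 3 * X 6 - X 2 * X 4 := hg
    have hb1 : (b + 1 - 1) = b := rfl
    rw [hb1] at hg'
    rcases hg' with rfl | rfl | rfl
    · fin_cases i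
      · exact not_X_dvd 0 _ (fun j => if j = 0 then 0 else 1) (by simp) (by simp)
      · exact not_X_dvd 1 _ (fun j => if j = 1 then 0 else 1) (by simp) (by simp)
      · exact not_X_dvd 2 _ (fun j => if j = 2 then 0 else 1) (by simp) (by simp)
      · exact not_X_dvd 3 _ (fun j => if j = 3 ∨ j = 1 then 0 else 1) (by simp) (by simp)
      · exact not_X_dvd 4 _ (fun j => if j = 4 then 0 else 1) (by simp) (by simp)
      · exact not_X_dvd 5 _ (fun j => if j = 5 then 0 else 1) (by simp) (by simp)
      · exact not_X_dvd 6 _ (fun j => if j = 6 then 0 else 1) (by simp) (by simp)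
    · fin_cases i
      · exact not_X_dvd 0 _ (fun j => if j = 0 ∨ j = 5 then 0 else 1) (by simp) (by simp)
      · exact not_X_dvd 1 _ (fun j => if j = 1 then 0 else 1) (by simp)
          (by simp [zero_pow (Nat.succ_ne_zero b)])
      · exact not_X_dvd 2 _ (fun j => if j = 2 ∨ j = 5 then 0 else 1) (by simp) (by simp)
      · exact not_X_dvd 3 _ (fun j => if j = 3 then 0 else 1) (by simp) (by simp)
      · exact not_X_dvd 4 _ (fun j => if j = 4 ∨ j = 5 then 0 else 1) (by simp) (by simp)
      · exact not_X_dvd 5 _ (fun j => if j = 5 then 0 else 1) (by simp) (by simp)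
      · exact not_X_dvd 6 _ (fun j => if j = 6 then 0 else 1) (by simp) (by simp)
    · fin_cases i
      · exact not_X_dvd 0 _ (fun j => if j = 0 then 0 else 1) (by simp) (by simp)
      · rcases Nat.eq_zero_or_pos b with rfl | hb
        · exact not_X_dvd 1 _ (fun j => if j = 1 ∨ j = 2 then 0 else 1) (by simp) (by simp)
        · exact not_X_dvd 1 _ (fun j => if j = 1 then 0 else 1) (by simp)
            (by simp [zero_pow hb.ne'])
      · exact not_X_dvd 2 _ (fun j => if j = 2 then 0 else 1) (by simp) (by simp)
      · exact not_X_dvd 3 _ (fun j => if j = 3 then 0 else 1) (by simp) (by simp)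
      · exact not_X_dvd 4 _ (fun j => if j = 4 then 0 else 1) (by simp) (by simp)
      · exact not_X_dvd 5 _ (fun j => if j = 5 ∨ j = 2 then 0 else 1) (by simp) (by simp)
      · exact not_X_dvd 6 _ (fun j => if j = 6 then 0 else 1) (by simp) (by simp)
  · -- saturation with respect to each variable
    intro i g k hgk
    rw [hGI, mem_iff_phi] at hgk ⊢
    rw [map_mul, map_pow, phi_X] at hgk
    rcases mul_eq_zero.mp hgk with h | h
    · exact h
    · exact absurd h (pow_ne_zero _ (vals_ne b i))
  · -- saturation with respect to the product of all variables
    intro g k hgk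
    rw [hGI, mem_iff_phi] at hgk ⊢
    rw [map_mul, map_pow, map_prod] at hgk
    rcases mul_eq_zero.mp hgk with h | h
    · exact h
    · exfalso
      have hne : (∏ i : Fin 7, phi K b (X i)) ≠ 0 := by
        rw [Finset.prod_ne_zero_iff]
        intro i _
        rw [phi_X]
        exact vals_ne b i
      exact pow_ne_zero _ hne h
end
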